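/- arXiv:2505.07529 — 4 statements merged into one kernel-verified Lean document; each statement's English description precedes it below -/
import Mathlib

section
/- Let R be a commutative Noetherian integrally closed domain (equivalently, a Noetherian Krull domain) and let S = R[[t]] be the ring of formal power series in one variable over R. Let M be a finitely generated S-module that is S-torsion, and suppose the quotient module M/tM is a torsion R-module. Then the t-power-torsion submodule M_t = { m ∈ M : t^n • m = 0 for some n ≥ 1 } is a finitely generated torsion R-module. -/
/-- The `t`-power-torsion submodule `M_t = {m ∈ M : t^n • m = 0 for some n ≥ 1}` of a module
`M` over `S = R[[t]]`, viewed as an `R`-submodule of `M` (here `t = PowerSeries.X`). -/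
def tPowerTorsion (R : Type*) [CommRing R] (M : Type*) [AddCommGroup M]
    [Module R M] [Module (PowerSeries R) M] [IsScalarTower R (PowerSeries R) M] :
    Submodule R M where
  carrier := {m | ∃ n : ℕ, 1 ≤ n ∧ (PowerSeries.X : PowerSeries R) ^ n • m = 0}
  zero_mem' := ⟨1, le_refl 1, smul_zero _⟩
  add_mem' := by
    rintro a b ⟨n, hn, ha⟩ ⟨k, hk, hb⟩
    refine ⟨n + k, le_trans hn (Nat.le_add_right n k), ?_⟩
    have ha' : (PowerSeries.X : PowerSeries R) ^ (n + k) • a = 0 := by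
      rw [pow_add, mul_comm, mul_smul, ha, smul_zero]
    have hb' : (PowerSeries.X : PowerSeries R) ^ (n + k) • b = 0 := by
      rw [pow_add, mul_smul, hb, smul_zero]
    rw [smul_add, ha', hb', add_zero]
  smul_mem' := by
    rintro r m ⟨n, hn, hm⟩
    exact ⟨n, hn, by rw [smul_comm, hm, smul_zero]⟩

open PowerSeries

section PSHilbertBasis
variable {R : Type*} [CommRing R]

def psLeadCoeff (I : Ideal R⟦X⟧) (n : ℕ) : Ideal R where
  carrier := {a | ∃ f ∈ I, (X : R⟦X⟧) ^ n ∣ f ∧ coeff n f = a}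
  zero_mem' := ⟨0, I.zero_mem, dvd_zero _, map_zero _⟩
  add_mem' := by
    rintro a b ⟨f, hfI, hfd, rfl⟩ ⟨g, hgI, hgd, rfl⟩
    exact ⟨f + g, I.add_mem hfI hgI, dvd_add hfd hgd, map_add _ _ _⟩
  smul_mem' := by
    rintro r a ⟨f, hfI, hfd, rfl⟩
    exact ⟨C r * f, I.mul_mem_left _ hfI, hfd.mul_left _, by simp [coeff_C_mul]⟩

lemma psLeadCoeff_mem {I : Ideal R⟦X⟧} {n : ℕ} {f : R⟦X⟧} (hfI : f ∈ I)
    (hfd : (X : R⟦X⟧) ^ n ∣ f) : coeff n f ∈ psLeadCoeff I n :=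
  ⟨f, hfI, hfd, rfl⟩

lemma psSpanWitness (I : Ideal R⟦X⟧) (d : ℕ)
    (hstab : ∀ m, d ≤ m → psLeadCoeff I d = psLeadCoeff I m)
    {p : ℕ} (a : Fin p → R) (hspan : Submodule.span R (Set.range a) = psLeadCoeff I d)
    (w : Fin p → R⟦X⟧) (hwI : ∀ j, w j ∈ I) (hwd : ∀ j, (X : R⟦X⟧) ^ d ∣ w j)
    (hwc : ∀ j, coeff d (w j) = a j)
    (f : R⟦X⟧) (hf : f ∈ I) (hfd : (X : R⟦X⟧) ^ d ∣ f) :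
    f ∈ Ideal.span (Set.range w) := by
  -- the one-step reduction
  have step : ∀ (s : ℕ) (h : R⟦X⟧), h ∈ I → (X : R⟦X⟧) ^ (d + s) ∣ h →
      ∃ r : Fin p → R,
        (h - ∑ j, C (r j) * ((X : R⟦X⟧) ^ s * w j)) ∈ I ∧
        (X : R⟦X⟧) ^ (d + s + 1) ∣ (h - ∑ j, C (r j) * ((X : R⟦X⟧) ^ s * w j)) := by
    intro s h hI hdvd
    have hmem : coeff (d + s) h ∈ psLeadCoeff I d := by
      rw [hstab (d + s) (Nat.le_add_right d s)]
      exact psLeadCoeff_mem hI hdvd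
    rw [← hspan] at hmem
    obtain ⟨r, hr⟩ := (Submodule.mem_span_range_iff_exists_fun R).mp hmem
    have hterm : ∀ j : Fin p, (X : R⟦X⟧) ^ (d + s) ∣ C (r j) * ((X : R⟦X⟧) ^ s * w j) := by
      intro j
      obtain ⟨q, hq⟩ := hwd j
      refine Dvd.dvd.mul_left ?_ _
      rw [hq, pow_add]
      exact ⟨q, by ring⟩
    have hdiffdvd : (X : R⟦X⟧) ^ (d + s) ∣
        (h - ∑ j, C (r j) * ((X : R⟦X⟧) ^ s * w j)) :=
      dvd_sub hdvd (Finset.dvd_sum fun j _ => hterm j)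
    refine ⟨r, I.sub_mem hI (Ideal.sum_mem _ fun j _ =>
      I.mul_mem_left _ (I.mul_mem_left _ (hwI j))), ?_⟩
    rw [PowerSeries.X_pow_dvd_iff]
    intro m hm
    rcases lt_or_ge m (d + s) with hlt | hge
    · exact PowerSeries.X_pow_dvd_iff.mp hdiffdvd m hlt
    · have hm' : m = d + s := by omega
      subst hm'
      rw [map_sub, map_sum, sub_eq_zero, ← hr]
      refine Finset.sum_congr rfl fun j _ => ?_
      rw [coeff_C_mul, PowerSeries.coeff_X_pow_mul, hwc j, smul_eq_mul]
  -- iterate, building the sequence of remainders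
  choose! rfun h1 h2 using step
  set F : ℕ → R⟦X⟧ := fun s => Nat.rec f
    (fun s hs => hs - ∑ j, C (rfun s hs j) * ((X : R⟦X⟧) ^ s * w j)) s with hF
  have hFsucc : ∀ s, F (s + 1) = F s - ∑ j, C (rfun s (F s) j) * ((X : R⟦X⟧) ^ s * w j) :=
    fun s => rfl
  have hinv : ∀ s, F s ∈ I ∧ (X : R⟦X⟧) ^ (d + s) ∣ F s := by
    intro s
    induction s with
    | zero => exact ⟨hf, by rw [Nat.add_zero]; exact hfd⟩
    | succ s ih =>
      rw [hFsucc]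
      exact ⟨h1 s (F s) ih.1 ih.2, h2 s (F s) ih.1 ih.2⟩
  -- partial sums
  have hpartial : ∀ s, f - ∑ j, (∑ i ∈ Finset.range s, C (rfun i (F i) j) *
      (X : R⟦X⟧) ^ i) * w j = F s := by
    intro s
    induction s with
    | zero => simp [hF]
    | succ s ih =>
      have hsplit : ∑ j, (∑ i ∈ Finset.range (s + 1), C (rfun i (F i) j) *
          (X : R⟦X⟧) ^ i) * w j
          = (∑ j, (∑ i ∈ Finset.range s, C (rfun i (F i) j) * (X : R⟦X⟧) ^ i) * w j)
            + ∑ j, C (rfun s (F s) j) * ((X : R⟦X⟧) ^ s * w j) := by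
        rw [← Finset.sum_add_distrib]
        refine Finset.sum_congr rfl fun j _ => ?_
        rw [Finset.sum_range_succ, add_mul, mul_assoc]
      rw [hsplit, ← sub_sub, ih, hFsucc]
  -- the power series coefficients
  set u : Fin p → R⟦X⟧ := fun j => PowerSeries.mk fun s => rfun s (F s) j with hu
  have key : f = ∑ j, u j * w j := by
    ext m
    have h0 : coeff m (F (m + 1)) = 0 :=
      PowerSeries.X_pow_dvd_iff.mp (hinv (m + 1)).2 m (by omega)
    have := hpartial (m + 1)
    have hcoeff : coeff m (f - ∑ j, (∑ i ∈ Finset.range (m + 1),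
        C (rfun i (F i) j) * (X : R⟦X⟧) ^ i) * w j) = 0 := by rw [this]; exact h0
    rw [map_sub, sub_eq_zero] at hcoeff
    rw [hcoeff, map_sum, map_sum]
    refine Finset.sum_congr rfl fun j _ => ?_
    rw [PowerSeries.coeff_mul, PowerSeries.coeff_mul]
    refine Finset.sum_congr rfl fun q hq => ?_
    rw [Finset.HasAntidiagonal.mem_antidiagonal] at hq
    congr 1
    rw [hu]
    simp only [coeff_mk]
    rw [map_sum, Finset.sum_eq_single q.1]
    · rw [coeff_C_mul, PowerSeries.coeff_X_pow_self, mul_one]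
    · intro i _ hne
      rw [coeff_C_mul, PowerSeries.coeff_X_pow, if_neg (Ne.symm hne), mul_zero]
    · intro hnot
      exact absurd (Finset.mem_range.mpr (by omega)) hnot
  rw [key]
  exact Ideal.sum_mem _ fun j _ =>
    Ideal.mul_mem_left _ _ (Ideal.subset_span ⟨j, rfl⟩)

lemma psLeadCoeff_mono (I : Ideal R⟦X⟧) : Monotone (psLeadCoeff I) := by
  apply monotone_nat_of_le_succ
  rintro n a ⟨f, hfI, hfd, rfl⟩
  exact ⟨X * f, I.mul_mem_left _ hfI, by rw [pow_succ']; exact mul_dvd_mul_left _ hfd,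
    coeff_succ_X_mul n f⟩

lemma psLeadCoeff_spec {I : Ideal R⟦X⟧} {n : ℕ} {a : R} (ha : a ∈ psLeadCoeff I n) :
    ∃ f ∈ I, (X : R⟦X⟧) ^ n ∣ f ∧ coeff n f = a := ha

/-- pick generators-with-witnesses for the `n`-th leading coefficient ideal -/
lemma psWitnessFamily [IsNoetherianRing R] (I : Ideal R⟦X⟧) (n : ℕ) :
    ∃ (p : ℕ) (a : Fin p → R) (w : Fin p → R⟦X⟧),
      Submodule.span R (Set.range a) = psLeadCoeff I n ∧
      (∀ j, w j ∈ I) ∧ (∀ j, (X : R⟦X⟧) ^ n ∣ w j) ∧ (∀ j, coeff n (w j) = a j) := by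
  obtain ⟨p, a, ha⟩ := Submodule.fg_iff_exists_fin_generating_family.mp
    (IsNoetherian.noetherian (psLeadCoeff I n))
  have haj : ∀ j, a j ∈ psLeadCoeff I n := fun j => by
    rw [← ha]; exact Submodule.subset_span ⟨j, rfl⟩
  choose w hwI hwd hwc using fun j => psLeadCoeff_spec (haj j)
  exact ⟨p, a, w, ha, hwI, hwd, hwc⟩

theorem psNoetherian [IsNoetherianRing R] : IsNoetherianRing R⟦X⟧ := by
  rw [isNoetherianRing_iff_ideal_fg]
  intro I
  obtain ⟨d, hd⟩ := monotone_stabilizes_iff_noetherian.mpr inferInstance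
    ⟨psLeadCoeff I, psLeadCoeff_mono I⟩
  have hstab : ∀ m, d ≤ m → psLeadCoeff I d = psLeadCoeff I m := fun m hm => hd m hm
  -- descent from order n up to order d
  have aux : ∀ k n, d = n + k → ∃ G : Set R⟦X⟧, G.Finite ∧ G ⊆ I ∧
      ∀ f ∈ I, (X : R⟦X⟧) ^ n ∣ f → f ∈ Ideal.span G := by
    intro k
    induction k with
    | zero =>
      intro n hn
      have hnd : n = d := by omega
      subst hnd
      obtain ⟨p, a, w, hspan, hwI, hwd, hwc⟩ := psWitnessFamily I n
      exact ⟨Set.range w, Set.finite_range w,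
        by rintro x ⟨j, rfl⟩; exact hwI j,
        fun f hf hfd => psSpanWitness I n hstab a hspan w hwI hwd hwc f hf hfd⟩
    | succ k ih =>
      intro n hn
      obtain ⟨G', hG'fin, hG'I, hG'⟩ := ih (n + 1) (by omega)
      obtain ⟨p, a, w, hspan, hwI, hwd, hwc⟩ := psWitnessFamily I n
      refine ⟨G' ∪ Set.range w, hG'fin.union (Set.finite_range w), ?_, ?_⟩
      · rintro x (hx | ⟨j, rfl⟩)
        · exact hG'I hx
        · exact hwI j
      · intro f hf hfd
        have hmem : coeff n f ∈ psLeadCoeff I n := psLeadCoeff_mem hf hfd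
        rw [← hspan] at hmem
        obtain ⟨r, hr⟩ := (Submodule.mem_span_range_iff_exists_fun R).mp hmem
        set g : R⟦X⟧ := ∑ j, C (r j) * w j with hg
        have hgI : g ∈ I := Ideal.sum_mem _ fun j _ => I.mul_mem_left _ (hwI j)
        have hfg : f - g ∈ I := I.sub_mem hf hgI
        have hfgd : (X : R⟦X⟧) ^ (n + 1) ∣ f - g := by
          rw [PowerSeries.X_pow_dvd_iff]
          intro m hm
          rcases lt_or_ge m n with hlt | hge
          · rw [map_sub, PowerSeries.X_pow_dvd_iff.mp hfd m hlt, hg, map_sum, sub_eq_zero]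
            symm
            refine Finset.sum_eq_zero fun j _ => ?_
            rw [coeff_C_mul, PowerSeries.X_pow_dvd_iff.mp (hwd j) m hlt, mul_zero]
          · have hm' : m = n := by omega
            subst hm'
            rw [map_sub, hg, map_sum, sub_eq_zero, ← hr]
            refine Finset.sum_congr rfl fun j _ => ?_
            rw [coeff_C_mul, hwc j, smul_eq_mul]
        have h1 : f - g ∈ Ideal.span (G' ∪ Set.range w) :=
          Ideal.span_mono Set.subset_union_left (hG' _ hfg hfgd)
        have h2 : g ∈ Ideal.span (G' ∪ Set.range w) := by
          rw [hg]
          exact Ideal.sum_mem _ fun j _ => Ideal.mul_mem_left _ _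
            (Ideal.subset_span (Set.mem_union_right _ ⟨j, rfl⟩))
        simpa using Ideal.add_mem _ h1 h2
  obtain ⟨G, hGfin, hGI, hG⟩ := aux d 0 (by omega)
  have hIeq : I = Ideal.span G := by
    refine le_antisymm ?_ ?_
    · intro f hf
      exact hG f hf (by simpa using dvd_refl (1 : R⟦X⟧))
    · rw [Ideal.span_le]; exact hGI
  rw [hIeq]
  exact Submodule.fg_def.mpr ⟨G, hGfin, rfl⟩

/-- commuting `R`-scalars past `R⟦X⟧`-scalars -/
lemma psSmul_comm {W : Type*} [AddCommGroup W] [Module R W] [Module R⟦X⟧ W]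
    [IsScalarTower R R⟦X⟧ W] (r : R) (f : R⟦X⟧) (w : W) :
    f • (r • w) = r • (f • w) := by
  rw [← algebraMap_smul R⟦X⟧ r w, ← mul_smul, mul_comm, mul_smul, algebraMap_smul]

/-- if `X^n` kills `w`, the action of any power series on `w` is a finite `R`-combination -/
lemma psSmul_eq_sum {W : Type*} [AddCommGroup W] [Module R W] [Module R⟦X⟧ W]
    [IsScalarTower R R⟦X⟧ W] {n : ℕ} (s : R⟦X⟧) (w : W)
    (hw : (X : R⟦X⟧) ^ n • w = 0) :
    s • w = ∑ i ∈ Finset.range n, coeff i s • ((X : R⟦X⟧) ^ i • w) := by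
  have hdvd : (X : R⟦X⟧) ^ n ∣ s - ∑ i ∈ Finset.range n, C (coeff i s) * X ^ i := by
    rw [PowerSeries.X_pow_dvd_iff]
    intro j hj
    rw [map_sub, map_sum, sub_eq_zero, Finset.sum_eq_single j]
    · rw [coeff_C_mul, PowerSeries.coeff_X_pow_self, mul_one]
    · intro i _ hne
      rw [coeff_C_mul, PowerSeries.coeff_X_pow, if_neg (Ne.symm hne), mul_zero]
    · intro hnot
      exact absurd (Finset.mem_range.mpr hj) hnot
  obtain ⟨q, hq⟩ := hdvd
  have hs : s = (∑ i ∈ Finset.range n, C (coeff i s) * X ^ i) + (X : R⟦X⟧) ^ n * q := by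
    rw [← hq]; ring
  nth_rewrite 1 [hs]
  rw [add_smul]
  have h1 : ((X : R⟦X⟧) ^ n * q) • w = 0 := by
    rw [mul_comm, mul_smul, hw, smul_zero]
  rw [h1, add_zero, Finset.sum_smul]
  refine Finset.sum_congr rfl fun i _ => ?_
  rw [mul_smul, ← algebraMap_smul (R := R) R⟦X⟧ (coeff i s) ((X : R⟦X⟧) ^ i • w)]
  congr 1

/-- a module finite over `R⟦X⟧` and killed by `X^n` is finite over `R` -/
lemma psFgOfKilled {W : Type*} [AddCommGroup W] [Module R W] [Module R⟦X⟧ W]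
    [IsScalarTower R R⟦X⟧ W] {n : ℕ} (hn : 1 ≤ n)
    (hfg : (⊤ : Submodule R⟦X⟧ W).FG)
    (hkill : ∀ w : W, (X : R⟦X⟧) ^ n • w = 0) :
    (⊤ : Submodule R W).FG := by
  obtain ⟨G, hG⟩ := hfg
  set bigset : Set W := ⋃ i ∈ Finset.range n, (fun g => (X : R⟦X⟧) ^ i • g) '' (↑G : Set W)
    with hbig
  have hfin : bigset.Finite :=
    Set.Finite.biUnion (Finset.finite_toSet _) fun i _ => G.finite_toSet.image _
  have hXmem : ∀ w ∈ Submodule.span R bigset, (X : R⟦X⟧) • w ∈ Submodule.span R bigset := by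
    intro w hw
    induction hw using Submodule.span_induction with
    | mem x hx =>
      obtain ⟨i, hi, g, hg, rfl⟩ := by
        simpa only [hbig, Set.mem_iUnion, Set.mem_image, exists_prop] using hx
      rw [Finset.mem_range] at hi
      rw [← mul_smul, ← pow_succ']
      rcases lt_or_ge (i + 1) n with h | h
      · exact Submodule.subset_span (by
          simp only [hbig, Set.mem_iUnion, Set.mem_image, exists_prop]
          exact ⟨i + 1, Finset.mem_range.mpr h, g, hg, rfl⟩)
      · have : i + 1 = n := by omega
        rw [this, hkill g]
        exact Submodule.zero_mem _
    | zero => rw [smul_zero]; exact Submodule.zero_mem _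
    | add x y _ _ hx hy => rw [smul_add]; exact Submodule.add_mem _ hx hy
    | smul r x _ hx =>
      rw [psSmul_comm]
      exact Submodule.smul_mem _ r hx
  have hXpow : ∀ (i : ℕ), ∀ w ∈ Submodule.span R bigset,
      (X : R⟦X⟧) ^ i • w ∈ Submodule.span R bigset := by
    intro i
    induction i with
    | zero => intro w hw; rwa [pow_zero, one_smul]
    | succ i ih =>
      intro w hw
      rw [pow_succ', mul_smul]
      exact hXmem _ (ih w hw)
  have hspan : Submodule.span R bigset = ⊤ := by
    rw [eq_top_iff]
    intro w hwtop
    clear hwtop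
    have hw : w ∈ Submodule.span R⟦X⟧ (↑G : Set W) := by rw [hG]; trivial
    induction hw using Submodule.span_induction with
    | mem x hx =>
      have : (X : R⟦X⟧) ^ 0 • x ∈ bigset := by
        simp only [hbig, Set.mem_iUnion, Set.mem_image, exists_prop]
        exact ⟨0, Finset.mem_range.mpr hn, x, hx, rfl⟩
      rw [pow_zero, one_smul] at this
      exact Submodule.subset_span this
    | zero => exact Submodule.zero_mem _
    | add x y _ _ hx hy => exact Submodule.add_mem _ hx hy
    | smul s x _ hx =>
      rw [psSmul_eq_sum s x (hkill x)]
      exact Submodule.sum_mem _ fun i _ => Submodule.smul_mem _ _ (hXpow i x hx)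
  rw [← hspan]
  exact Submodule.fg_span hfin


end PSHilbertBasis

/-- The `t`-power-torsion as an `R⟦X⟧`-submodule. -/
def tPowerTorsionS (R : Type*) [CommRing R] (M : Type*) [AddCommGroup M]
    [Module (PowerSeries R) M] : Submodule (PowerSeries R) M where
  carrier := {m | ∃ n : ℕ, 1 ≤ n ∧ (PowerSeries.X : PowerSeries R) ^ n • m = 0}
  zero_mem' := ⟨1, le_refl 1, smul_zero _⟩
  add_mem' := by
    rintro a b ⟨n, hn, ha⟩ ⟨k, hk, hb⟩
    refine ⟨n + k, le_trans hn (Nat.le_add_right n k), ?_⟩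
    have ha' : (PowerSeries.X : PowerSeries R) ^ (n + k) • a = 0 := by
      rw [pow_add, mul_comm, mul_smul, ha, smul_zero]
    have hb' : (PowerSeries.X : PowerSeries R) ^ (n + k) • b = 0 := by
      rw [pow_add, mul_smul, hb, smul_zero]
    rw [smul_add, ha', hb', add_zero]
  smul_mem' := by
    rintro s m ⟨n, hn, hm⟩
    exact ⟨n, hn, by rw [smul_comm, hm, smul_zero]⟩



/-- Let `R` be a commutative Noetherian integrally closed domain and
`S = R[[t]]`.  If `M` is a finitely generated torsion `S`-module such that `M/tM` is a
torsion `R`-module, then the `t`-power-torsion submodule `M_t` is a finitely generated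
torsion `R`-module. -/
theorem tPowerTorsion_fg_and_isTorsion
    (R : Type*) [CommRing R] [IsDomain R] [IsNoetherianRing R] [IsIntegrallyClosed R]
    (M : Type*) [AddCommGroup M] [Module R M] [Module (PowerSeries R) M]
    [IsScalarTower R (PowerSeries R) M]
    [Module.Finite (PowerSeries R) M]
    (htor : Module.IsTorsion (PowerSeries R) M)
    (hquot : Module.IsTorsion R
      (M ⧸ LinearMap.range
        ((LinearMap.lsmul (PowerSeries R) M (PowerSeries.X : PowerSeries R)).restrictScalars R))) :
    (tPowerTorsion R M).FG ∧ Module.IsTorsion R (tPowerTorsion R M) := by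
  haveI : IsNoetherianRing (PowerSeries R) := psNoetherian
  haveI : IsNoetherian (PowerSeries R) M := inferInstance
  set N := tPowerTorsionS R M with hN
  have hNfg : N.FG := IsNoetherian.noetherian N
  -- a uniform bound on torsion exponents
  obtain ⟨G, hG⟩ := hNfg
  have hGmem : ∀ g ∈ G, ∃ j : ℕ, (X : R⟦X⟧) ^ j • g = 0 := by
    intro g hg
    have : g ∈ N := hG ▸ Submodule.subset_span hg
    obtain ⟨j, _, hj⟩ := this
    exact ⟨j, hj⟩
  classical
  choose! e he using hGmem
  set n : ℕ := G.sup e + 1 with hn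
  have hn1 : 1 ≤ n := Nat.le_add_left 1 _
  have hGkill : ∀ g ∈ G, (X : R⟦X⟧) ^ n • g = 0 := by
    intro g hg
    have hle : e g ≤ n := le_trans (Finset.le_sup hg) (Nat.le_succ _)
    have : (X : R⟦X⟧) ^ n = X ^ (n - e g) * X ^ (e g) := by
      rw [← pow_add]
      congr 1
      omega
    rw [this, mul_smul, he g hg, smul_zero]
  have hbound : ∀ m ∈ N, (X : R⟦X⟧) ^ n • m = 0 := by
    intro m hm
    have hle : N ≤ Submodule.torsionBy R⟦X⟧ M ((X : R⟦X⟧) ^ n) := by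
      rw [← hG, Submodule.span_le]
      intro g hg
      exact (Submodule.mem_torsionBy_iff _ _).mpr (hGkill g hg)
    exact (Submodule.mem_torsionBy_iff _ _).mp (hle hm)
  have hmem_iff : ∀ m : M, m ∈ tPowerTorsion R M ↔ m ∈ N := fun m => Iff.rfl
  constructor
  · -- finite generation over R
    have hfgS : (⊤ : Submodule R⟦X⟧ ↥N).FG := (Submodule.fg_top N).mpr ⟨G, hG⟩
    have hkill : ∀ w : ↥N, (X : R⟦X⟧) ^ n • w = 0 := by
      intro w
      apply Subtype.ext
      show (X : R⟦X⟧) ^ n • (w : M) = 0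
      exact hbound w w.2
    have hfgR : (⊤ : Submodule R ↥N).FG := psFgOfKilled hn1 hfgS hkill
    have hmap : (Submodule.map ((N.subtype).restrictScalars R) ⊤) = tPowerTorsion R M := by
      ext m
      simp only [Submodule.map_top, LinearMap.mem_range]
      constructor
      · rintro ⟨⟨x, hx⟩, rfl⟩
        exact hx
      · intro hm
        exact ⟨⟨m, (hmem_iff m).mp hm⟩, rfl⟩
    rw [← hmap]
    exact Submodule.FG.map _ hfgR
  · -- torsion over R
    have move : ∀ (k : ℕ), ∀ m ∈ N, ∃ (r : nonZeroDivisors R) (m' : M),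
        m' ∈ N ∧ (r : R) • m = (X : R⟦X⟧) ^ k • m' := by
      intro k
      induction k with
      | zero =>
        intro m hm
        exact ⟨1, m, hm, by simp⟩
      | succ k ih =>
        intro m hm
        obtain ⟨r, m', hm', heq⟩ := ih m hm
        obtain ⟨s, hs⟩ := @hquot (Submodule.Quotient.mk m')
        rw [← Submodule.Quotient.mk_smul, Submodule.Quotient.mk_eq_zero] at hs
        obtain ⟨m'', hm''⟩ := hs
        have hXm'' : (X : R⟦X⟧) • m'' = (s : R) • m' := hm''
        obtain ⟨j, hj1, hj⟩ := hm'
        have hm''N : m'' ∈ N := by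
          refine ⟨j + 1, le_trans hj1 (Nat.le_succ j), ?_⟩
          rw [pow_succ, mul_smul, hXm'', psSmul_comm, hj, smul_zero]
        refine ⟨s * r, m'', hm''N, ?_⟩
        rw [Submonoid.coe_mul, mul_smul, heq, ← psSmul_comm, ← hXm'', ← mul_smul, ← pow_succ]
    intro x
    obtain ⟨r, m', hm', heq⟩ := move n x.1 ((hmem_iff _).mp x.2)
    have : (r : R) • (x : M) = 0 := by rw [heq, hbound m' hm']
    exact ⟨r, Subtype.ext (by rwa [Submonoid.smul_def, Submodule.coe_smul])⟩
end

section
/- Let p be a prime, ℤ_p the ring of p-adic integers, and Λ = ℤ_p[[X]] the ring of formal power series in one variable over ℤ_p. Let M be a finitely generated Λ-module which is Λ-torsion-free (no nonzero element of M is annihilated by a nonzero element of Λ). Then M is a free Λ-module if and only if the quotient M/XM is a torsion-free (equivalently, finite free) ℤ_p-module. -/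
open PowerSeries

section Aux

variable {R : Type*} [CommRing R]

/-- Shift a power series down by one: `psShift f = (f - f(0))/X`. -/
noncomputable def psShift (f : PowerSeries R) : PowerSeries R :=
  PowerSeries.mk fun n => PowerSeries.coeff (n + 1) f

@[simp] lemma psShift_zero : psShift (0 : PowerSeries R) = 0 := by
  ext n; simp [psShift]

lemma X_mul_psShift {f : PowerSeries R} (hf : constantCoeff f = 0) :
    (X : PowerSeries R) * psShift f = f := by
  ext n
  cases n with
  | zero =>
    rw [coeff_zero_X_mul, coeff_zero_eq_constantCoeff, hf]
  | succ n =>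
    rw [coeff_succ_X_mul, psShift, coeff_mk]

/-- In a free module over `R⟦X⟧` (with `R` a domain), if `C a • m = X • m'` with `a ≠ 0`,
then `m` is divisible by `X`. -/
lemma exists_X_smul_of_C_smul_eq_X_smul [IsDomain R] {M : Type*} [AddCommGroup M]
    [Module (PowerSeries R) M] [Module.Free (PowerSeries R) M] {a : R} (ha : a ≠ 0)
    {m m' : M} (h : (C a) • m = (X : PowerSeries R) • m') :
    ∃ m'', (X : PowerSeries R) • m'' = m := by
  classical
  let b := Module.Free.chooseBasis (PowerSeries R) M
  have hrep : ∀ i, (C a) * b.repr m i = (X : PowerSeries R) * b.repr m' i := by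
    intro i
    have h' := congrArg (fun z => b.repr z i) h
    simpa [Finsupp.smul_apply, smul_eq_mul] using h'
  have hc0 : ∀ i, constantCoeff (b.repr m i) = 0 := by
    intro i
    have h' := congrArg (constantCoeff) (hrep i)
    simp only [map_mul, constantCoeff_C, constantCoeff_X, zero_mul] at h'
    rcases mul_eq_zero.mp h' with h'' | h''
    · exact absurd h'' ha
    · exact h''
  refine ⟨b.repr.symm ((b.repr m).mapRange psShift psShift_zero), ?_⟩
  apply b.repr.injective
  rw [map_smul, LinearEquiv.apply_symm_apply]
  ext i
  rw [Finsupp.smul_apply, Finsupp.mapRange_apply, smul_eq_mul, X_mul_psShift (hc0 i)]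

end Aux

/-- Let `Λ = ℤ_p[[X]]` and let `M` be a finitely generated torsion-free
`Λ`-module.  Then `M` is a free `Λ`-module if and only if `M/XM` is a torsion-free
`ℤ_p`-module. -/
theorem free_iff_quotient_torsionFree (p : ℕ) [Fact p.Prime]
    (M : Type*) [AddCommGroup M] [Module (PadicInt p) M]
    [Module (PowerSeries (PadicInt p)) M]
    [IsScalarTower (PadicInt p) (PowerSeries (PadicInt p)) M]
    [Module.Finite (PowerSeries (PadicInt p)) M]
    [NoZeroSMulDivisors (PowerSeries (PadicInt p)) M] :
    Module.Free (PowerSeries (PadicInt p)) M ↔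
      NoZeroSMulDivisors (PadicInt p)
        (M ⧸ LinearMap.range
          ((LinearMap.lsmul (PowerSeries (PadicInt p)) M
            (PowerSeries.X : PowerSeries (PadicInt p))).restrictScalars (PadicInt p))) := by
  classical
  set R := PadicInt p
  set Λ := PowerSeries R with hΛ
  set S : Submodule Λ M := LinearMap.range (LinearMap.lsmul Λ M (X : Λ)) with hSdef
  have hrange : LinearMap.range ((LinearMap.lsmul Λ M (X : Λ)).restrictScalars R)
      = S.restrictScalars R := rfl
  have hmemS : ∀ m : M, m ∈ S ↔ ∃ y, (X : Λ) • y = m := by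
    intro m; simp [hSdef, LinearMap.mem_range, LinearMap.lsmul_apply]
  -- basic facts about the quotient Q = M ⧸ S
  have hXzero : ∀ q : M ⧸ S, (X : Λ) • q = 0 := by
    intro q
    obtain ⟨m, rfl⟩ := Submodule.Quotient.mk_surjective S q
    rw [← Submodule.Quotient.mk_smul, Submodule.Quotient.mk_eq_zero]
    exact (hmemS _).mpr ⟨m, rfl⟩
  have hCsmul : ∀ (a : R) (q : M ⧸ S), (C a) • q = a • q := by
    intro a q
    rw [← algebraMap_smul Λ a q, PowerSeries.algebraMap_apply]
    simp
  have hfsmul : ∀ (f : Λ) (q : M ⧸ S), f • q = (constantCoeff f) • q := by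
    intro f q
    have hc : constantCoeff (f - C (constantCoeff f)) = 0 := by simp
    have h2 : (f - C (constantCoeff f)) • q = 0 := by
      rw [← X_mul_psShift hc, mul_smul, hXzero]
    have h1 : f • q = (C (constantCoeff f)) • q + (f - C (constantCoeff f)) • q := by
      rw [← add_smul]
      congr 1
      ring
    rw [h1, h2, add_zero, hCsmul]
  constructor
  · -- forward direction
    intro hfree
    refine ⟨fun {a n} han => ?_⟩
    rcases eq_or_ne a 0 with rfl | ha
    · exact Or.inl rfl
    refine Or.inr ?_
    obtain ⟨m, rfl⟩ := Submodule.Quotient.mk_surjective _ n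
    rw [← Submodule.Quotient.mk_smul, Submodule.Quotient.mk_eq_zero] at han
    obtain ⟨m', hm'⟩ := han
    have hm'' : (X : Λ) • m' = a • m := hm'
    have hca : (C a) • m = (X : Λ) • m' := by
      rw [hm'', ← algebraMap_smul Λ a m, PowerSeries.algebraMap_apply]
      rfl
    obtain ⟨m'', hm2⟩ := exists_X_smul_of_C_smul_eq_X_smul ha hca
    rw [Submodule.Quotient.mk_eq_zero]
    exact ⟨m'', hm2⟩
  · -- backward direction
    intro hN
    rw [hrange] at hN
    -- transfer torsion-freeness to M ⧸ S
    let e := Submodule.Quotient.restrictScalarsEquiv R S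
    haveI hQtf : NoZeroSMulDivisors R (M ⧸ S) := by
      refine ⟨fun {a q} h => ?_⟩
      have h' : a • e.symm q = 0 := by rw [← map_smul, h, map_zero]
      rcases eq_zero_or_eq_zero_of_smul_eq_zero h' with h'' | h''
      · exact Or.inl h''
      · refine Or.inr ?_
        have := congrArg e h''
        rwa [LinearEquiv.apply_symm_apply, map_zero] at this
    haveI : Module.Finite Λ (M ⧸ S) :=
      Module.Finite.of_surjective S.mkQ (Submodule.Quotient.mk_surjective S)
    obtain ⟨s, hs⟩ := Module.Finite.fg_top (R := Λ) (M := M ⧸ S)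
    haveI : Module.Finite R (M ⧸ S) := by
      refine ⟨⟨s, ?_⟩⟩
      rw [eq_top_iff]
      intro q _
      have hq : q ∈ Submodule.span Λ (s : Set (M ⧸ S)) := by rw [hs]; trivial
      refine Submodule.span_induction (fun y hy => Submodule.subset_span hy)
        (Submodule.zero_mem _) (fun y z _ _ hy hz => Submodule.add_mem _ hy hz)
        (fun f y _ hy => ?_) hq
      rw [hfsmul]
      exact Submodule.smul_mem _ _ hy
    haveI hQfree : Module.Free R (M ⧸ S) := Module.free_of_finite_type_torsion_free'
    let ι := Module.Free.ChooseBasisIndex R (M ⧸ S)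
    haveI : Fintype ι := Fintype.ofFinite ι
    let b : Module.Basis ι R (M ⧸ S) := Module.Free.chooseBasis R (M ⧸ S)
    have hxex : ∀ i : ι, ∃ m : M, S.mkQ m = b i := fun i =>
      Submodule.Quotient.mk_surjective S (b i)
    choose x hx using hxex
    -- spanning, via Nakayama
    have hST : (Ideal.span {(X : Λ)}) • (⊤ : Submodule Λ M) = S := by
      apply le_antisymm
      · refine Submodule.smul_le.mpr fun r hr n _ => ?_
        obtain ⟨c, rfl⟩ := Ideal.mem_span_singleton'.mp hr
        rw [mul_comm, mul_smul]
        exact (hmemS _).mpr ⟨c • n, rfl⟩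
      · intro m hm
        obtain ⟨y, rfl⟩ := (hmemS m).mp hm
        exact Submodule.smul_mem_smul (Ideal.subset_span rfl) trivial
    have hjac : Ideal.span {(X : Λ)} ≤ Ideal.jacobson ⊥ := by
      rw [IsLocalRing.jacobson_eq_maximalIdeal ⊥ bot_ne_top, Ideal.span_le,
        Set.singleton_subset_iff]
      intro hunit
      have h0 : IsUnit (constantCoeff (X : Λ)) :=
        PowerSeries.isUnit_iff_constantCoeff.mp hunit
      rw [constantCoeff_X] at h0
      exact not_isUnit_zero h0
    have hNN : (⊤ : Submodule Λ M) ≤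
        Submodule.span Λ (Set.range x) ⊔ Ideal.span {(X : Λ)} • ⊤ := by
      rw [hST]
      intro m _
      have h1 : S.mkQ m ∈ Submodule.span R (Set.range ⇑b) := b.mem_span _
      have h2 : S.mkQ m ∈ Submodule.span Λ (Set.range ⇑b) :=
        Submodule.span_le_restrictScalars R Λ _ h1
      have h3 : Set.range ⇑b = ⇑S.mkQ '' Set.range x := by
        rw [← Set.range_comp, show ⇑S.mkQ ∘ x = ⇑b from funext hx]
      rw [h3, ← Submodule.map_span] at h2
      obtain ⟨m', hm'mem, hm'eq⟩ := h2
      have hdiff : m - m' ∈ S := by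
        rw [← Submodule.Quotient.eq]
        exact hm'eq.symm
      exact Submodule.mem_sup.mpr ⟨m', hm'mem, m - m', hdiff, by abel⟩
    have hspan : Submodule.span Λ (Set.range x) = ⊤ :=
      top_le_iff.mp (Submodule.le_of_le_smul_of_le_jacobson_bot Module.Finite.fg_top hjac hNN)
    -- linear independence
    have key : ∀ (k : ℕ) (g : ι → Λ), (∑ i, g i • x i) = 0 → ∀ i, (X : Λ) ^ k ∣ g i := by
      intro k
      induction k with
      | zero => intro g _ i; simp only [pow_zero]; exact one_dvd (g i)
      | succ k ih =>
        intro g hg i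
        have hq : ∑ j, (constantCoeff (g j)) • b j = 0 := by
          have h' := congrArg S.mkQ hg
          rw [map_sum, map_zero] at h'
          rw [← h']
          refine Finset.sum_congr rfl fun j _ => ?_
          rw [map_smul, hx, hfsmul]
        have hc0 : ∀ j, constantCoeff (g j) = 0 :=
          Fintype.linearIndependent_iff.mp b.linearIndependent _ hq
        have hX : (X : Λ) • (∑ j, psShift (g j) • x j) = 0 := by
          rw [Finset.smul_sum, ← hg]
          refine Finset.sum_congr rfl fun j _ => ?_
          rw [← mul_smul, X_mul_psShift (hc0 j)]
        have hsum0 : (∑ j, psShift (g j) • x j) = 0 := by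
          rcases smul_eq_zero.mp hX with h' | h'
          · exact absurd h' X_ne_zero
          · exact h'
        have hdvd := ih _ hsum0 i
        rw [← X_mul_psShift (hc0 i), pow_succ']
        exact mul_dvd_mul_left _ hdvd
    have hli : LinearIndependent Λ x := by
      rw [Fintype.linearIndependent_iff]
      intro g hg i
      ext n
      rw [map_zero]
      exact X_pow_dvd_iff.mp (key (n + 1) g hg i) n (lt_add_one n)
    exact Module.Free.of_basis (Module.Basis.mk hli (by rw [hspan]))
end

section
/- Let p be a prime, ℤ_p the ring of p-adic integers, and Λ = ℤ_p[[X]] the ring of formal power series in one variable over ℤ_p. Let M be a finitely generated Λ-module. Then M is finite (as a set) if and only if the annihilator ideal of M in Λ has height at least 2, i.e. if and only if M is pseudo-null over Λ. -/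
open PowerSeries IsLocalRing
set_option synthInstance.maxHeartbeats 1000000
set_option maxHeartbeats 1000000
variable {p : ℕ} [Fact p.Prime]

lemma PadicAux.not_isUnit_iff {x : ℤ_[p]} : ¬IsUnit x ↔ (p : ℤ_[p]) ∣ x := by
  rw [← Ideal.mem_span_singleton, ← PadicInt.maximalIdeal_eq_span_p,
    IsLocalRing.mem_maximalIdeal, mem_nonunits_iff]

lemma PadicAux.smod_iff {x y : ℤ_[p]} {k : ℕ} :
    x ≡ y [SMOD (maximalIdeal ℤ_[p] ^ k • ⊤ : Submodule ℤ_[p] ℤ_[p])] ↔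
      (p : ℤ_[p]) ^ k ∣ (x - y) := by
  rw [SModEq.sub_mem, smul_eq_mul, Ideal.mul_top, PadicInt.maximalIdeal_eq_span_p,
    Ideal.span_singleton_pow, Ideal.mem_span_singleton]

lemma PadicAux.pow_dvd_iff_coeff {k : ℕ} {f : PowerSeries ℤ_[p]} :
    (p : PowerSeries ℤ_[p]) ^ k ∣ f ↔ ∀ j, (p : ℤ_[p]) ^ k ∣ coeff j f := by
  have hC : ((p : PowerSeries ℤ_[p])) ^ k = C ((p : ℤ_[p]) ^ k) := by
    rw [map_pow, map_natCast]
  constructor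
  · rintro ⟨g, rfl⟩ j
    rw [hC, coeff_C_mul]
    exact Dvd.intro _ rfl
  · intro h
    choose g hg using h
    refine ⟨PowerSeries.mk g, ?_⟩
    ext j
    rw [hC, coeff_C_mul, coeff_mk]
    exact hg j

lemma PadicAux.eq_zero_of_forall_pow_dvd {f : PowerSeries ℤ_[p]}
    (h : ∀ k, (p : PowerSeries ℤ_[p]) ^ k ∣ f) : f = 0 := by
  ext j
  rw [map_zero]
  refine IsHausdorff.haus (inferInstance : IsHausdorff (maximalIdeal ℤ_[p]) ℤ_[p]) _ fun k => ?_
  rw [PadicAux.smod_iff]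
  simpa using (PadicAux.pow_dvd_iff_coeff.mp (h k)) j

lemma PadicAux.dvd_iff_coeff {f : PowerSeries ℤ_[p]} :
    (p : PowerSeries ℤ_[p]) ∣ f ↔ ∀ j, (p : ℤ_[p]) ∣ coeff j f := by
  simpa using PadicAux.pow_dvd_iff_coeff (k := 1) (f := f)

noncomputable def trF (n : ℕ) (f : PowerSeries ℤ_[p]) : PowerSeries ℤ_[p] :=
  PowerSeries.mk fun j => if j < n then coeff j f else 0

noncomputable def shF (n : ℕ) (f : PowerSeries ℤ_[p]) : PowerSeries ℤ_[p] :=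
  PowerSeries.mk fun j => coeff (n + j) f

lemma split (n : ℕ) (f : PowerSeries ℤ_[p]) : f = trF n f + X ^ n * shF n f := by
  ext j
  rw [map_add, coeff_X_pow_mul']
  by_cases h : j < n
  · simp [trF, coeff_mk, h, if_neg (by omega : ¬ n ≤ j)]
  · have h' : n ≤ j := by omega
    simp [trF, shF, coeff_mk, h, if_pos h', Nat.add_sub_cancel' h']

lemma eq_sum_of_coeff_vanish {f : PowerSeries ℤ_[p]} {n : ℕ}
    (h : ∀ j, n ≤ j → coeff j f = 0) :
    f = ∑ j ∈ Finset.range n, (coeff j f) • (X ^ j : PowerSeries ℤ_[p]) := by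
  ext k
  rw [map_sum]
  have : ∀ j ∈ Finset.range n, coeff k ((coeff j f) • (X ^ j : PowerSeries ℤ_[p]))
      = if k = j then coeff j f else 0 := by
    intro j _
    rw [LinearMap.map_smul, coeff_X_pow, smul_eq_mul, mul_ite, mul_one, mul_zero]
  rw [Finset.sum_congr rfl this, Finset.sum_ite_eq (Finset.range n) k (fun j => coeff j f)]
  by_cases hk : k < n
  · simp [hk]
  · simp [hk, Finset.mem_range, h k (by omega)]


/-- Weierstrass division, existence part. -/
theorem weierstrass_division {g : PowerSeries ℤ_[p]} {n : ℕ}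
    (hn : IsUnit (coeff n g)) (hlow : ∀ j < n, ¬ IsUnit (coeff j g))
    (f₀ : PowerSeries ℤ_[p]) :
    ∃ q r : PowerSeries ℤ_[p], (∀ j, n ≤ j → coeff j r = 0) ∧ f₀ = q * g + r := by
  classical
  have hh : IsUnit (shF n g) := by
    rw [isUnit_iff_constantCoeff]
    simpa [shF, coeff_mk, coeff_zero_eq_constantCoeff] using hn
  obtain ⟨u, hu⟩ := hh
  set v : PowerSeries ℤ_[p] := ↑u⁻¹ with hv
  have huu : v * shF n g = 1 := by rw [← hu]; exact u.inv_mul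
  have hpa : (p : PowerSeries ℤ_[p]) ∣ trF n g := by
    rw [← pow_one (p : PowerSeries ℤ_[p]), PadicAux.pow_dvd_iff_coeff]
    intro j
    rw [pow_one]
    by_cases hj : j < n
    · simpa [trF, coeff_mk, hj] using PadicAux.not_isUnit_iff.mp (hlow j hj)
    · simp [trF, coeff_mk, hj]
  obtain ⟨a', ha'⟩ := hpa
  set step : PowerSeries ℤ_[p] → PowerSeries ℤ_[p] := fun f => -(shF n f * v * a') with hstep
  have hg' : g = trF n g + X ^ n * shF n g := split n g
  have key : ∀ f : PowerSeries ℤ_[p],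
      f = trF n f + (shF n f * v) * g + (p : PowerSeries ℤ_[p]) * step f := by
    intro f
    have h1 : (p : PowerSeries ℤ_[p]) * step f = -(shF n f * v * trF n g) := by
      rw [hstep]; simp only []; rw [ha']; ring
    have expand : (shF n f * v) * g + (p : PowerSeries ℤ_[p]) * step f = X ^ n * shF n f := by
      rw [h1]
      nth_rewrite 1 [hg']
      calc shF n f * v * (trF n g + X ^ n * shF n g) + -(shF n f * v * trF n g)
          = X ^ n * (shF n f * (v * shF n g)) := by ring
        _ = X ^ n * shF n f := by rw [huu, mul_one]
    rw [add_assoc, expand]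
    exact split n f
  set F : ℕ → PowerSeries ℤ_[p] := fun k => step^[k] f₀ with hF
  set Qp : ℕ → PowerSeries ℤ_[p] :=
    fun k => ∑ i ∈ Finset.range k, (p : PowerSeries ℤ_[p]) ^ i * (shF n (F i) * v) with hQp
  set Rp : ℕ → PowerSeries ℤ_[p] :=
    fun k => ∑ i ∈ Finset.range k, (p : PowerSeries ℤ_[p]) ^ i * trF n (F i) with hRp
  have hFsucc : ∀ k, F (k + 1) = step (F k) := by
    intro k; rw [hF]; simp [Function.iterate_succ_apply']
  have hQsucc : ∀ k, Qp (k + 1) = Qp k + (p : PowerSeries ℤ_[p]) ^ k * (shF n (F k) * v) := by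
    intro k; rw [hQp]; simp only []; rw [Finset.sum_range_succ]
  have hRsucc : ∀ k, Rp (k + 1) = Rp k + (p : PowerSeries ℤ_[p]) ^ k * trF n (F k) := by
    intro k; rw [hRp]; simp only []; rw [Finset.sum_range_succ]
  have ind : ∀ k, f₀ = Rp k + Qp k * g + (p : PowerSeries ℤ_[p]) ^ k * F k := by
    intro k
    induction k with
    | zero => simp [hQp, hRp, hF]
    | succ k ih =>
      rw [hQsucc, hRsucc, hFsucc]
      linear_combination ih + (p : PowerSeries ℤ_[p]) ^ k * key (F k)
  have hQdiff : ∀ k l, (p : PowerSeries ℤ_[p]) ^ k ∣ (Qp (k + l) - Qp k) := by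
    intro k l
    induction l with
    | zero => simp
    | succ l ih =>
      rw [← add_assoc, hQsucc]
      have : Qp (k + l) + (p : PowerSeries ℤ_[p]) ^ (k + l) * (shF n (F (k + l)) * v) - Qp k
          = (Qp (k + l) - Qp k) + (p : PowerSeries ℤ_[p]) ^ (k + l) * (shF n (F (k + l)) * v) := by
        ring
      rw [this]
      exact dvd_add ih (Dvd.dvd.mul_right (pow_dvd_pow _ (by omega)) _)
  have hRdiff : ∀ k l, (p : PowerSeries ℤ_[p]) ^ k ∣ (Rp (k + l) - Rp k) := by
    intro k l
    induction l with
    | zero => simp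
    | succ l ih =>
      rw [← add_assoc, hRsucc]
      have : Rp (k + l) + (p : PowerSeries ℤ_[p]) ^ (k + l) * trF n (F (k + l)) - Rp k
          = (Rp (k + l) - Rp k) + (p : PowerSeries ℤ_[p]) ^ (k + l) * trF n (F (k + l)) := by
        ring
      rw [this]
      exact dvd_add ih (Dvd.dvd.mul_right (pow_dvd_pow _ (by omega)) _)
  have hlim : ∀ (S : ℕ → PowerSeries ℤ_[p]),
      (∀ k l, (p : PowerSeries ℤ_[p]) ^ k ∣ (S (k + l) - S k)) →
      ∃ L : PowerSeries ℤ_[p], ∀ k, (p : PowerSeries ℤ_[p]) ^ k ∣ (S k - L) := by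
    intro S hS
    have hjlim : ∀ j : ℕ, ∃ Lj : ℤ_[p], ∀ k, (p : ℤ_[p]) ^ k ∣ (coeff j (S k) - Lj) := by
      intro j
      have prec := (inferInstance : IsPrecomplete (maximalIdeal ℤ_[p]) ℤ_[p]).prec
        (f := fun k => coeff j (S k)) ?_
      · obtain ⟨L, hL⟩ := prec
        exact ⟨L, fun k => by
          have h2 := hL k
          rw [PadicAux.smod_iff] at h2
          exact h2⟩
      · intro m m' hmm
        obtain ⟨l, rfl⟩ := Nat.exists_eq_add_of_le hmm
        rw [PadicAux.smod_iff]
        have h3 := (PadicAux.pow_dvd_iff_coeff.mp (hS m l)) j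
        rw [map_sub] at h3
        simpa using (dvd_neg.mpr h3)
    choose Lj hLj using hjlim
    refine ⟨PowerSeries.mk Lj, fun k => ?_⟩
    rw [PadicAux.pow_dvd_iff_coeff]
    intro j
    rw [map_sub, coeff_mk]
    exact hLj j k
  obtain ⟨q, hq⟩ := hlim Qp hQdiff
  obtain ⟨r, hr⟩ := hlim Rp hRdiff
  have hrv : ∀ j, n ≤ j → coeff j r = 0 := by
    intro j hj
    have hRp0 : ∀ k, coeff j (Rp k) = 0 := by
      intro k
      rw [hRp]
      simp only [map_sum]
      refine Finset.sum_eq_zero fun i _ => ?_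
      have hCp : (p : PowerSeries ℤ_[p]) ^ i = C ((p : ℤ_[p]) ^ i) := by
        rw [map_pow, map_natCast]
      rw [hCp, coeff_C_mul, trF, coeff_mk, if_neg (by omega)]
      ring
    refine IsHausdorff.haus (inferInstance : IsHausdorff (maximalIdeal ℤ_[p]) ℤ_[p]) _ fun k => ?_
    rw [PadicAux.smod_iff]
    have h4 := (PadicAux.pow_dvd_iff_coeff.mp (hr k)) j
    rw [map_sub, hRp0 k] at h4
    simpa using (dvd_neg.mpr h4)
  refine ⟨q, r, hrv, ?_⟩
  have hdvd : ∀ k, (p : PowerSeries ℤ_[p]) ^ k ∣ (f₀ - (q * g + r)) := by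
    intro k
    have hid : f₀ - (q * g + r)
        = (Rp k - r) + (Qp k - q) * g + (p : PowerSeries ℤ_[p]) ^ k * F k := by
      linear_combination ind k
    rw [hid]
    exact dvd_add (dvd_add (hr k) ((hq k).mul_right g)) (Dvd.intro _ rfl)
  have h0 := PadicAux.eq_zero_of_forall_pow_dvd hdvd
  exact sub_eq_zero.mp h0

/-- The quotient of `ℤ_p[[X]]` by an ideal containing a nonunit `g` not divisible by `p`
is a finitely generated `ℤ_p`-module. -/
theorem moduleFinite_quot {I : Ideal (PowerSeries ℤ_[p])} {g : PowerSeries ℤ_[p]}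
    (hgI : g ∈ I) (hgu : ¬ IsUnit g) (hgp : ¬ (p : PowerSeries ℤ_[p]) ∣ g) :
    Module.Finite ℤ_[p] (PowerSeries ℤ_[p] ⧸ I) := by
  classical
  have hex : ∃ j, IsUnit (coeff j g) := by
    by_contra h
    push_neg at h
    exact hgp (PadicAux.dvd_iff_coeff.mpr fun j => PadicAux.not_isUnit_iff.mp (h j))
  set n := Nat.find hex with hn
  have hnu : IsUnit (coeff n g) := Nat.find_spec hex
  have hlow : ∀ j < n, ¬ IsUnit (coeff j g) := fun j hj => Nat.find_min hex hj
  have hmk_smul : ∀ (c : ℤ_[p]) (x : PowerSeries ℤ_[p]),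
      Ideal.Quotient.mk I (c • x) = c • Ideal.Quotient.mk I x := by
    intro c x
    exact (Submodule.Quotient.mk_smul I c x).symm
  refine ⟨⟨Finset.image (fun j => Ideal.Quotient.mk I ((X : PowerSeries ℤ_[p]) ^ j))
    (Finset.range n), eq_top_iff.mpr fun b _ => ?_⟩⟩
  obtain ⟨f₀, rfl⟩ := Ideal.Quotient.mk_surjective b
  obtain ⟨q, r, hrv, hfr⟩ := weierstrass_division hnu hlow f₀
  have hmkr : Ideal.Quotient.mk I f₀ = Ideal.Quotient.mk I r := by
    rw [hfr, map_add, Ideal.Quotient.eq_zero_iff_mem.mpr (I.mul_mem_left q hgI), zero_add]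
  rw [hmkr, eq_sum_of_coeff_vanish hrv, map_sum]
  refine Submodule.sum_mem _ fun j hj => ?_
  rw [hmk_smul]
  exact Submodule.smul_mem _ _ (Submodule.subset_span
    (Finset.mem_coe.mpr (Finset.mem_image_of_mem _ hj)))

/-- A prime of `ℤ_p[[X]]` containing `p` and an element not divisible by `p`
is the maximal ideal. -/
theorem eq_maximal_of_mem (P : Ideal (PowerSeries ℤ_[p])) (hP : P.IsPrime)
    (hp : (p : PowerSeries ℤ_[p]) ∈ P) {y : PowerSeries ℤ_[p]} (hy : y ∈ P)
    (hynd : ¬ (p : PowerSeries ℤ_[p]) ∣ y) :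
    P = maximalIdeal (PowerSeries ℤ_[p]) := by
  classical
  set ρ : PowerSeries ℤ_[p] →+* PowerSeries (ZMod p) :=
    PowerSeries.map (PadicInt.toZMod : ℤ_[p] →+* ZMod p) with hρ
  have hker : ∀ f, ρ f = 0 ↔ (p : PowerSeries ℤ_[p]) ∣ f := by
    intro f
    rw [PadicAux.dvd_iff_coeff, PowerSeries.ext_iff]
    refine forall_congr' fun j => ?_
    rw [hρ, coeff_map, map_zero, ← RingHom.mem_ker, PadicInt.ker_toZMod,
      PadicInt.maximalIdeal_eq_span_p, Ideal.mem_span_singleton]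
  have hρsurj : Function.Surjective ρ := by
    intro F
    refine ⟨PowerSeries.mk fun j => ((coeff j F).val : ℤ_[p]), ?_⟩
    ext j
    rw [hρ, coeff_map, coeff_mk]
    push_cast
    rw [map_natCast]
    exact ZMod.natCast_rightInverse _
  have hρy : ρ y ≠ 0 := fun h => hynd ((hker y).mp h)
  have hXdvd : (X : PowerSeries (ZMod p)) ∣ ρ y := by
    rw [X_dvd_iff]
    have hyu : ¬ IsUnit y := fun h => hP.ne_top (Ideal.eq_top_of_isUnit_mem P hy h)
    rw [isUnit_iff_constantCoeff] at hyu
    have := PadicAux.not_isUnit_iff.mp hyu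
    rw [hρ]
    calc constantCoeff (PowerSeries.map PadicInt.toZMod y)
        = PadicInt.toZMod (constantCoeff y) := by
          rw [← coeff_zero_eq_constantCoeff_apply, coeff_map, coeff_zero_eq_constantCoeff_apply]
      _ = 0 := by
          rw [← RingHom.mem_ker, PadicInt.ker_toZMod, PadicInt.maximalIdeal_eq_span_p,
            Ideal.mem_span_singleton]
          exact this
  obtain ⟨v, w, hw, hfac⟩ := WfDvdMonoid.max_power_factor' hρy
    (by
      intro h
      rw [isUnit_iff_constantCoeff, constantCoeff_X] at h
      exact not_isUnit_zero h)
  have hwu : IsUnit w := by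
    rw [isUnit_iff_constantCoeff, isUnit_iff_ne_zero]
    intro h0
    exact hw (X_dvd_iff.mpr h0)
  obtain ⟨W, hW⟩ := hwu
  obtain ⟨w', hw'⟩ := hρsurj (↑W⁻¹ : PowerSeries (ZMod p))
  have hXvP : (X : PowerSeries ℤ_[p]) ^ v - y * w' ∈ P := by
    have : ρ ((X : PowerSeries ℤ_[p]) ^ v - y * w') = 0 := by
      rw [map_sub, map_mul, hw', map_pow, hρ, PowerSeries.map_X, hfac, ← hW]
      rw [mul_assoc, Units.mul_inv, mul_one, sub_self]
    obtain ⟨c, hc⟩ := (hker _).mp this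
    rw [hc]
    exact P.mul_mem_right c hp
  have hXv : (X : PowerSeries ℤ_[p]) ^ v ∈ P := by
    have : (X : PowerSeries ℤ_[p]) ^ v = ((X : PowerSeries ℤ_[p]) ^ v - y * w') + y * w' := by ring
    rw [this]
    exact P.add_mem hXvP (P.mul_mem_right w' hy)
  have hX : (X : PowerSeries ℤ_[p]) ∈ P := hP.mem_of_pow_mem v hXv
  refine le_antisymm (IsLocalRing.le_maximalIdeal hP.ne_top) ?_
  intro x hx
  have hxu : ¬ IsUnit x := hx
  rw [isUnit_iff_constantCoeff] at hxu
  obtain ⟨c, hc⟩ := PadicAux.not_isUnit_iff.mp hxu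
  obtain ⟨t, ht⟩ := X_dvd_iff.mpr (show constantCoeff
      (x - C (constantCoeff x)) = 0 by
    rw [map_sub, constantCoeff_C, sub_self])
  have hxeq : x = (p : PowerSeries ℤ_[p]) * C c + X * t := by
    have h1 : x = C (constantCoeff x) + X * t := by rw [← ht]; ring
    rw [h1, hc, map_mul, map_natCast]
  rw [hxeq]
  exact P.add_mem (P.mul_mem_right _ hp) (P.mul_mem_right _ hX)

lemma exists_mem_not_dvd {Q : Ideal (PowerSeries ℤ_[p])} (h1 : Q.IsPrime) (hne : Q ≠ ⊥)
    (hpQ : (p : PowerSeries ℤ_[p]) ∉ Q) :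
    ∃ g ∈ Q, ¬ (p : PowerSeries ℤ_[p]) ∣ g := by
  by_contra hcon
  push_neg at hcon
  apply hne
  have hk : ∀ k, ∀ x ∈ Q, (p : PowerSeries ℤ_[p]) ^ k ∣ x := by
    intro k
    induction k with
    | zero => intro x _; simp
    | succ k ih =>
      intro x hx
      obtain ⟨y, rfl⟩ := hcon x hx
      have hy : y ∈ Q := (h1.mem_or_mem hx).resolve_left hpQ
      obtain ⟨z, rfl⟩ := ih y hy
      exact ⟨z, by ring⟩
  ext x
  simp only [Ideal.mem_bot]
  constructor
  · intro hx
    exact PadicAux.eq_zero_of_forall_pow_dvd fun k => hk k x hx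
  · rintro rfl
    exact Q.zero_mem

/-- Key classification: a prime of `ℤ_p[[X]]` with a chain of two primes strictly below it
is the maximal ideal. -/
theorem prime_eq_maximal_of_chain {Q₀ Q₁ P : Ideal (PowerSeries ℤ_[p])}
    (h0 : Q₀.IsPrime) (h1 : Q₁.IsPrime) (hP : P.IsPrime)
    (h01 : Q₀ < Q₁) (h1P : Q₁ < P) : P = maximalIdeal (PowerSeries ℤ_[p]) := by
  classical
  have hQ1ne : Q₁ ≠ ⊥ := by
    rintro rfl
    exact not_lt_bot h01
  by_cases hpP : (p : PowerSeries ℤ_[p]) ∈ P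
  · by_cases hpQ : (p : PowerSeries ℤ_[p]) ∈ Q₁
    · obtain ⟨y, hyP, hyQ⟩ := SetLike.exists_of_lt h1P
      refine eq_maximal_of_mem P hP hpP hyP ?_
      rintro ⟨c, rfl⟩
      exact hyQ (Q₁.mul_mem_right c hpQ)
    · obtain ⟨g, hgQ, hgp⟩ := exists_mem_not_dvd h1 hQ1ne hpQ
      exact eq_maximal_of_mem P hP hpP (h1P.le hgQ) hgp
  · exfalso
    have hpQ : (p : PowerSeries ℤ_[p]) ∉ Q₁ := fun h => hpP (h1P.le h)
    obtain ⟨g, hgQ, hgp⟩ := exists_mem_not_dvd h1 hQ1ne hpQ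
    have hgu : ¬ IsUnit g := fun h => h1.ne_top (Ideal.eq_top_of_isUnit_mem Q₁ hgQ h)
    haveI hfin : Module.Finite ℤ_[p] (PowerSeries ℤ_[p] ⧸ Q₁) := moduleFinite_quot hgQ hgu hgp
    haveI := h1
    obtain ⟨y, hyP, hyQ⟩ := SetLike.exists_of_lt h1P
    set D := PowerSeries ℤ_[p] ⧸ Q₁
    set x : D := Ideal.Quotient.mk Q₁ y with hx
    have hx0 : x ≠ 0 := fun h => hyQ (Ideal.Quotient.eq_zero_iff_mem.mp h)
    have h𝔭prime : (P.map (Ideal.Quotient.mk Q₁)).IsPrime :=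
      Ideal.map_isPrime_of_surjective Ideal.Quotient.mk_surjective
        (by rw [Ideal.mk_ker]; exact h1P.le)
    haveI := h𝔭prime
    have hx𝔭 : x ∈ P.map (Ideal.Quotient.mk Q₁) := Ideal.mem_map_of_mem _ hyP
    have hcne : Ideal.comap (algebraMap ℤ_[p] D) (P.map (Ideal.Quotient.mk Q₁)) ≠ ⊥ :=
      Ideal.comap_ne_bot_of_integral_mem hx0 hx𝔭 (IsIntegral.of_finite ℤ_[p] x)
    have hcmax : (Ideal.comap (algebraMap ℤ_[p] D) (P.map (Ideal.Quotient.mk Q₁))).IsMaximal :=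
      IsPrime.to_maximal_ideal hcne
    have hceq := IsLocalRing.eq_maximalIdeal hcmax
    have hpmem : (p : ℤ_[p]) ∈ Ideal.comap (algebraMap ℤ_[p] D) (P.map (Ideal.Quotient.mk Q₁)) := by
      rw [hceq, PadicInt.maximalIdeal_eq_span_p]
      exact Ideal.mem_span_singleton_self _
    rw [Ideal.mem_comap, map_natCast] at hpmem
    have hpP' : (p : PowerSeries ℤ_[p]) ∈ Ideal.comap (Ideal.Quotient.mk Q₁)
        (P.map (Ideal.Quotient.mk Q₁)) := by
      rw [Ideal.mem_comap, map_natCast]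
      exact hpmem
    rw [Ideal.comap_map_of_surjective _ Ideal.Quotient.mk_surjective,
      ← RingHom.ker_eq_comap_bot, Ideal.mk_ker, sup_eq_left.mpr h1P.le] at hpP'
    exact hpP hpP'

lemma X_mem_maximal : (X : PowerSeries ℤ_[p]) ∈ maximalIdeal (PowerSeries ℤ_[p]) := by
  rw [mem_maximalIdeal, mem_nonunits_iff, isUnit_iff_constantCoeff, constantCoeff_X]
  exact not_isUnit_zero

lemma p_mem_maximal : (p : PowerSeries ℤ_[p]) ∈ maximalIdeal (PowerSeries ℤ_[p]) := by
  rw [mem_maximalIdeal, mem_nonunits_iff, isUnit_iff_constantCoeff, map_natCast]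
  exact fun h => (PadicAux.not_isUnit_iff.mpr dvd_rfl) h

/-- An ideal `I` of a commutative ring has height at least `2`: below every prime ideal
containing `I` there is a strictly decreasing chain of two further prime ideals. -/
def Ideal.HeightGETwo {A : Type*} [CommRing A] (I : Ideal A) : Prop :=
  ∀ P : Ideal A, P.IsPrime → I ≤ P →
    ∃ Q₀ Q₁ : Ideal A, Q₀.IsPrime ∧ Q₁.IsPrime ∧ Q₀ < Q₁ ∧ Q₁ < P

/-- Let `Λ = ℤ_p[[X]]` and let `M` be a finitely generated `Λ`-module.
Then `M` is finite as a set if and only if the annihilator ideal of `M` in `Λ` has height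
at least `2`, i.e. if and only if `M` is pseudo-null over `Λ`. -/
theorem finite_iff_annihilator_heightGETwo (p : ℕ) [Fact p.Prime]
    (M : Type*) [AddCommGroup M] [Module (PowerSeries (PadicInt p)) M]
    [Module.Finite (PowerSeries (PadicInt p)) M] :
    Finite M ↔
      Ideal.HeightGETwo (Module.annihilator (PowerSeries (PadicInt p)) M) := by
  classical
  constructor
  · intro hM
    intro P hP hannP
    obtain ⟨n, gs, hgs⟩ := Module.Finite.exists_fin (R := PowerSeries ℤ_[p]) (M := M)
    -- the quotient by the annihilator is finite
    set ψ : PowerSeries ℤ_[p] →ₗ[PowerSeries ℤ_[p]] (Fin n → M) :=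
      LinearMap.pi (fun i => LinearMap.toSpanSingleton (PowerSeries ℤ_[p]) M (gs i)) with hψ
    have hann_le : (Module.annihilator (PowerSeries ℤ_[p]) M : Submodule (PowerSeries ℤ_[p])
        (PowerSeries ℤ_[p])) ≤ LinearMap.ker ψ := by
      intro a ha
      rw [LinearMap.mem_ker]
      funext i
      exact Module.mem_annihilator.mp ha (gs i)
    have hker_le : LinearMap.ker ψ ≤ Module.annihilator (PowerSeries ℤ_[p]) M := by
      intro a ha
      rw [LinearMap.mem_ker] at ha
      rw [Module.mem_annihilator]
      intro m
      have hm : m ∈ Submodule.span (PowerSeries ℤ_[p]) (Set.range gs) := by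
        rw [hgs]; trivial
      induction hm using Submodule.span_induction with
      | mem y hy =>
        obtain ⟨i, rfl⟩ := hy
        have h2 : ψ a i = 0 := congrFun ha i
        rw [hψ, LinearMap.pi_apply, LinearMap.toSpanSingleton_apply] at h2
        exact h2
      | zero => exact smul_zero a
      | add y z _ _ hy hz => rw [smul_add, hy, hz, add_zero]
      | smul c y _ hy => rw [smul_comm, hy, smul_zero]
    haveI hfin1 : Finite (PowerSeries ℤ_[p] ⧸ Module.annihilator (PowerSeries ℤ_[p]) M) := by
      have hinj : Function.Injective
          ((Module.annihilator (PowerSeries ℤ_[p]) M).liftQ ψ hann_le) := by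
        rw [← LinearMap.ker_eq_bot]
        exact Submodule.ker_liftQ_eq_bot _ _ _ hker_le
      exact Finite.of_injective _ hinj
    haveI hfin2 : Finite (PowerSeries ℤ_[p] ⧸ P) := by
      refine Finite.of_surjective
        (Ideal.Quotient.factor hannP) ?_
      intro y
      obtain ⟨x, rfl⟩ := Ideal.Quotient.mk_surjective y
      exact ⟨Ideal.Quotient.mk _ x, Ideal.Quotient.factor_mk hannP x⟩
    haveI := hP
    have hfield : IsField (PowerSeries ℤ_[p] ⧸ P) := Finite.isField_of_domain _
    have hPmax : P.IsMaximal := Ideal.Quotient.maximal_of_isField P hfield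
    have hPm : P = maximalIdeal (PowerSeries ℤ_[p]) := IsLocalRing.eq_maximalIdeal hPmax
    refine ⟨⊥, Ideal.span {(X : PowerSeries ℤ_[p])}, Ideal.bot_prime, ?_, ?_, ?_⟩
    · have hkerX : Ideal.span {(X : PowerSeries ℤ_[p])}
          = RingHom.ker (constantCoeff : PowerSeries ℤ_[p] →+* ℤ_[p]) := by
        ext f
        rw [Ideal.mem_span_singleton, RingHom.mem_ker, ← X_dvd_iff]
      rw [hkerX]
      exact RingHom.ker_isPrime _
    · refine lt_of_le_of_ne bot_le ?_
      intro h
      exact X_ne_zero (Ideal.span_singleton_eq_bot.mp h.symm)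
    · rw [hPm]
      refine lt_of_le_of_ne ?_ ?_
      · rw [Ideal.span_le, Set.singleton_subset_iff]
        exact X_mem_maximal
      · intro h
        have hpX : (p : PowerSeries ℤ_[p]) ∈ Ideal.span {(X : PowerSeries ℤ_[p])} := by
          rw [h]; exact p_mem_maximal
        rw [Ideal.mem_span_singleton] at hpX
        have := X_dvd_iff.mp hpX
        rw [map_natCast] at this
        exact (Fact.out : p.Prime).ne_zero (Nat.cast_eq_zero.mp this)
  · intro H
    set A := Module.annihilator (PowerSeries ℤ_[p]) M with hA
    have hrad : maximalIdeal (PowerSeries ℤ_[p]) ≤ A.radical := by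
      rw [Ideal.radical_eq_sInf]
      refine le_sInf ?_
      rintro J ⟨hAJ, hJprime⟩
      obtain ⟨Q₀, Q₁, h0, h1, h01, h1J⟩ := H J hJprime hAJ
      exact le_of_eq (prime_eq_maximal_of_chain h0 h1 hJprime h01 h1J).symm
    obtain ⟨a, ha⟩ := Ideal.mem_radical_iff.mp (hrad p_mem_maximal)
    obtain ⟨b, hb⟩ := Ideal.mem_radical_iff.mp (hrad X_mem_maximal)
    obtain ⟨n, gs, hgs⟩ := Module.Finite.exists_fin (R := PowerSeries ℤ_[p]) (M := M)
    haveI : NeZero (p ^ a) := ⟨pow_ne_zero a (Fact.out : p.Prime).ne_zero⟩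
    set sec : (Fin b → ZMod (p ^ a)) → PowerSeries ℤ_[p] :=
      fun c => ∑ j : Fin b, (((c j).val : ℕ) : PowerSeries ℤ_[p]) * X ^ (j : ℕ) with hsec
    have hcoeff_sec : ∀ (c : Fin b → ZMod (p ^ a)) (k : ℕ),
        coeff k (sec c) = if hk : k < b then (((c ⟨k, hk⟩).val : ℕ) : ℤ_[p]) else 0 := by
      intro c k
      rw [hsec]
      simp only [map_sum]
      have hterm : ∀ j : Fin b, coeff k ((((c j).val : ℕ) : PowerSeries ℤ_[p]) * X ^ (j : ℕ))
          = if k = (j : ℕ) then (((c j).val : ℕ) : ℤ_[p]) else 0 := by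
        intro j
        rw [show (((c j).val : ℕ) : PowerSeries ℤ_[p]) = C (((c j).val : ℕ) : ℤ_[p]) by
          rw [map_natCast], coeff_C_mul, coeff_X_pow, mul_ite, mul_one, mul_zero]
      rw [Finset.sum_congr rfl (fun j _ => hterm j)]
      by_cases hk : k < b
      · rw [Finset.sum_eq_single (⟨k, hk⟩ : Fin b)]
        · simp [hk]
        · intro j _ hj
          rw [if_neg]
          intro hkj
          exact hj (by ext; simp [← hkj])
        · intro h; exact absurd (Finset.mem_univ _) h
      · rw [dif_neg hk]
        refine Finset.sum_eq_zero fun j _ => ?_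
        rw [if_neg]
        intro hkj
        exact hk (hkj ▸ j.isLt)
    have hdiff : ∀ h : PowerSeries ℤ_[p],
        h - sec (fun j => PadicInt.toZModPow a (coeff (j : ℕ) h))
          ∈ Ideal.span {(p : PowerSeries ℤ_[p]) ^ a, (X : PowerSeries ℤ_[p]) ^ b} := by
      intro h
      set d := h - sec (fun j => PadicInt.toZModPow a (coeff (j : ℕ) h)) with hd
      have hdvd : ∀ k, k < b → (p : ℤ_[p]) ^ a ∣ coeff k d := by
        intro k hk
        rw [hd, map_sub, hcoeff_sec, dif_pos hk]
        set z := coeff k h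
        have : PadicInt.toZModPow a (z - (((PadicInt.toZModPow a z).val : ℕ) : ℤ_[p])) = 0 := by
          rw [map_sub, map_natCast, ZMod.natCast_rightInverse, sub_self]
        rw [← RingHom.mem_ker, PadicInt.ker_toZModPow, Ideal.mem_span_singleton] at this
        exact_mod_cast this
      set d₁ : PowerSeries ℤ_[p] := PowerSeries.mk fun k =>
        if hk : k < b then Classical.choose (hdvd k hk) else 0 with hd₁
      set d₂ : PowerSeries ℤ_[p] := PowerSeries.mk fun k => coeff (b + k) d with hd₂
      have hdeq : d = (p : PowerSeries ℤ_[p]) ^ a * d₁ + X ^ b * d₂ := by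
        ext k
        rw [map_add, show ((p : PowerSeries ℤ_[p])) ^ a = C ((p : ℤ_[p]) ^ a) by
          rw [map_pow, map_natCast], coeff_C_mul, coeff_X_pow_mul']
        by_cases hk : k < b
        · rw [hd₁, coeff_mk, dif_pos hk, if_neg (by omega), add_zero]
          exact Classical.choose_spec (hdvd k hk)
        · rw [hd₁, coeff_mk, dif_neg hk, mul_zero, zero_add, if_pos (by omega), hd₂, coeff_mk,
            Nat.add_sub_cancel' (by omega)]
      rw [hdeq]
      exact Ideal.mem_span_pair.mpr ⟨d₁, d₂, by ring⟩
    have hspan_le : Ideal.span {(p : PowerSeries ℤ_[p]) ^ a, (X : PowerSeries ℤ_[p]) ^ b} ≤ A := by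
      rw [Ideal.span_le]
      rintro x hx
      rcases hx with rfl | hx
      · exact ha
      · rw [Set.mem_singleton_iff] at hx
        rw [hx]
        exact hb
    set Fm : (Fin n → Fin b → ZMod (p ^ a)) → M := fun t => ∑ i, (sec (t i)) • gs i with hFm
    have hsurj : Function.Surjective Fm := by
      intro x
      have hx : x ∈ Submodule.span (PowerSeries ℤ_[p]) (Set.range gs) := by rw [hgs]; trivial
      obtain ⟨f, hf⟩ := (Submodule.mem_span_range_iff_exists_fun (PowerSeries ℤ_[p])).mp hx
      refine ⟨fun i j => PadicInt.toZModPow a (coeff (j : ℕ) (f i)), ?_⟩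
      rw [hFm]
      simp only []
      rw [← hf]
      refine Finset.sum_congr rfl fun i _ => ?_
      have hmem := hspan_le (hdiff (f i))
      have h0 := Module.mem_annihilator.mp hmem (gs i)
      rw [sub_smul, sub_eq_zero] at h0
      exact h0.symm
    exact Finite.of_surjective Fm hsurj
end

section
/- Let p be a prime, ℤ_p the ring of p-adic integers, and Λ = ℤ_p[[X]] the ring of formal power series in one variable over ℤ_p. Let M be a finitely generated Λ-module such that the quotient M/XM is finite (as a set). Then M is a torsion Λ-module, i.e. every element of M is annihilated by some nonzero element of Λ. -/
/-- Let `Λ = ℤ_p[[X]]` and let `M` be a finitely generated `Λ`-module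
such that `M/XM` is finite.  Then `M` is a torsion `Λ`-module. -/
theorem isTorsion_of_quotient_finite (p : ℕ) [Fact p.Prime]
    (M : Type*) [AddCommGroup M] [Module (PowerSeries (PadicInt p)) M]
    [Module.Finite (PowerSeries (PadicInt p)) M]
    (hfin : Finite (M ⧸ LinearMap.range
      (LinearMap.lsmul (PowerSeries (PadicInt p)) M
        (PowerSeries.X : PowerSeries (PadicInt p))))) :
    Module.IsTorsion (PowerSeries (PadicInt p)) M := by
  classical
  set Λ := PowerSeries (PadicInt p)
  set N := LinearMap.range (LinearMap.lsmul Λ M (PowerSeries.X : Λ)) with hN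
  set n : ℕ := Nat.card (M ⧸ N) with hn
  have hnpos : 0 < n := Nat.card_pos
  -- `n • m ∈ N` for all `m`
  have hsmul : ∀ m : M, (n : Λ) • m ∈ N := by
    intro m
    have h0 : n • (Submodule.Quotient.mk m : M ⧸ N) = 0 := card_nsmul_eq_zero'
    have : (Submodule.Quotient.mk ((n : Λ) • m) : M ⧸ N) = 0 := by
      rw [Submodule.Quotient.mk_smul, Nat.cast_smul_eq_nsmul, h0]
    exact (Submodule.Quotient.mk_eq_zero N).mp this
  set r : Λ := (n : Λ) with hr
  set f : Module.End Λ M := LinearMap.lsmul Λ M r with hf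
  set I : Ideal Λ := Ideal.span {(PowerSeries.X : Λ)} with hI
  have hrange : LinearMap.range f ≤ I • (⊤ : Submodule Λ M) := by
    rintro y ⟨m, rfl⟩
    obtain ⟨m', hm'⟩ := hsmul m
    have : f m = (PowerSeries.X : Λ) • m' := hm'.symm
    rw [this]
    exact Submodule.smul_mem_smul (Ideal.subset_span rfl) trivial
  obtain ⟨q, hqmonic, -, hqcoeff, hqaeval⟩ :=
    LinearMap.exists_monic_and_coeff_mem_pow_and_aeval_eq_zero_of_range_le_smul Λ f I hrange
  set d : Λ := q.eval r with hd
  -- `d` annihilates `M`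
  have hfalg : f = algebraMap Λ (Module.End Λ M) r := by
    ext m
    simp [hf, Module.algebraMap_end_apply]
  have hann : ∀ m : M, d • m = 0 := by
    intro m
    have : Polynomial.aeval f q = algebraMap Λ (Module.End Λ M) d := by
      rw [hfalg, Polynomial.aeval_algebraMap_apply]
      congr 1
    have h0 : algebraMap Λ (Module.End Λ M) d = 0 := by rw [← this, hqaeval]
    have h1 := congrArg (fun g : Module.End Λ M => g m) h0
    simp only [Module.algebraMap_end_apply, LinearMap.zero_apply] at h1
    exact h1
  -- `d ≠ 0` since its constant coefficient is `n ^ deg q ≠ 0`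
  have hdne : d ≠ 0 := by
    intro h0
    have hcc : PowerSeries.constantCoeff (R := PadicInt p) d
        = (n : PadicInt p) ^ q.natDegree := by
      have hmap : q.map (PowerSeries.constantCoeff (R := PadicInt p))
          = Polynomial.X ^ q.natDegree := by
        ext i
        rcases lt_trichotomy i q.natDegree with hlt | heq | hgt
        · have hmem := hqcoeff i
          have hx : (PowerSeries.X : Λ) ∣ q.coeff i := by
            have h1 : q.coeff i ∈ I ^ (q.natDegree - i) := hmem
            have h2 : I ^ (q.natDegree - i) ≤ I := by
              apply Ideal.pow_le_self
              omega
            exact (Ideal.mem_span_singleton).mp (h2 h1)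
          obtain ⟨c, hc⟩ := hx
          simp [Polynomial.coeff_map, hc, Polynomial.coeff_X_pow, hlt.ne,
            map_mul]
        · simp [heq, Polynomial.coeff_map, hqmonic.coeff_natDegree,
            Polynomial.coeff_X_pow]
        · rw [Polynomial.coeff_map, Polynomial.coeff_eq_zero_of_natDegree_lt hgt,
            Polynomial.coeff_X_pow, if_neg hgt.ne', map_zero]
      have := Polynomial.hom_eval₂ q (RingHom.id Λ)
        (PowerSeries.constantCoeff (R := PadicInt p)) r
      rw [hd]
      rw [Polynomial.eval, this]
      have hrc : PowerSeries.constantCoeff (R := PadicInt p) r = (n : PadicInt p) := by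
        simp [hr]
      rw [← Polynomial.eval_map]
      simp only [RingHomCompTriple.comp_eq]
      rw [hmap, Polynomial.eval_pow, Polynomial.eval_X, hrc]
    rw [h0, map_zero] at hcc
    have : (n : PadicInt p) ≠ 0 := Nat.cast_ne_zero.mpr hnpos.ne'
    exact (pow_ne_zero _ this) hcc.symm
  intro m
  exact ⟨⟨d, mem_nonZeroDivisors_of_ne_zero hdne⟩, hann m⟩
end
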